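/- If there exist two cospectral graphs G and H (with respect to the adjacency matrix) with b(G) ≠ b(H) and each admitting an optimal burning sequence ending in a redundant source, then for every n ≥ 2 the graphs G ⊠ K_n and H ⊠ K_n are cospectral and satisfy b(G ⊠ K_n) ≠ b(H ⊠ K_n); hence there are infinitely many pairs of cospectral graphs with different burning numbers. -/

import Mathlib

/-- Zero forcing closure: vertices eventually colored blue. -/
inductive SimpleGraph.Forced {V : Type*} (G : SimpleGraph V) (B : Set V) : V → Prop
  | init (v : V) (hv : v ∈ B) : SimpleGraph.Forced G B v
  | force (v w : V) (hv : SimpleGraph.Forced G B v) (hadj : G.Adj v w)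
      (hall : ∀ u, G.Adj v u → u ≠ w → SimpleGraph.Forced G B u) : SimpleGraph.Forced G B w

def SimpleGraph.IsZeroForcingSet {V : Type*} (G : SimpleGraph V) (B : Set V) : Prop :=
  ∀ v, G.Forced B v

noncomputable def SimpleGraph.zeroForcingNumber {V : Type*} (G : SimpleGraph V) : ℕ :=
  sInf {n | ∃ B : Set V, B.ncard = n ∧ G.IsZeroForcingSet B}

/-- closed ball of radius r -/
def SimpleGraph.closedBall {V : Type*} (G : SimpleGraph V) (v : V) (r : ℕ) : Set V :=
  {w | G.edist v w ≤ (r : ℕ∞)}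

/-- Burning sequence (alternative characterization). -/
def SimpleGraph.IsBurningSeq {V : Type*} (G : SimpleGraph V) {k : ℕ} (s : Fin k → V) : Prop :=
  (∀ i j : Fin k, i ≠ j →
      ((((i : ℕ) : ℤ) - ((j : ℕ) : ℤ)).natAbs : ℕ∞) ≤ G.edist (s i) (s j)) ∧
  (⋃ l : Fin k, G.closedBall (s l) (k - 1 - (l : ℕ))) = Set.univ

noncomputable def SimpleGraph.burningNumber {V : Type*} (G : SimpleGraph V) : ℕ :=
  sInf {k | ∃ s : Fin k → V, G.IsBurningSeq s}

/-- Strong product of graphs. -/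
def SimpleGraph.strongProd {α β : Type*} (G : SimpleGraph α) (H : SimpleGraph β) :
    SimpleGraph (α × β) where
  Adj x y := (x.1 = y.1 ∧ H.Adj x.2 y.2) ∨ (x.2 = y.2 ∧ G.Adj x.1 y.1) ∨
    (G.Adj x.1 y.1 ∧ H.Adj x.2 y.2)
  symm := by
    constructor
    rintro ⟨a, b⟩ ⟨c, d⟩ (⟨h1, h2⟩ | ⟨h1, h2⟩ | ⟨h1, h2⟩)
    · exact Or.inl ⟨h1.symm, h2.symm⟩
    · exact Or.inr (Or.inl ⟨h1.symm, h2.symm⟩)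
    · exact Or.inr (Or.inr ⟨h1.symm, h2.symm⟩)
  loopless := by
    constructor
    rintro ⟨a, b⟩ (⟨_, h2⟩ | ⟨_, h2⟩ | ⟨h1, _⟩)
    exacts [H.loopless.irrefl b h2, G.loopless.irrefl a h2, G.loopless.irrefl a h1]

instance {α β : Type*} (G : SimpleGraph α) (H : SimpleGraph β)
    [DecidableEq α] [DecidableEq β] [DecidableRel G.Adj] [DecidableRel H.Adj] :
    DecidableRel (G.strongProd H).Adj :=
  fun _ _ => inferInstanceAs (Decidable (_ ∨ _ ∨ _))

section Hypergraph
variable {V : Type*} [DecidableEq V]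

/-- Lazy burning closure on a hypergraph given by its edge set. -/
inductive LazyBurned (E : Finset (Finset V)) (B : Set V) : V → Prop
  | init (v : V) (hv : v ∈ B) : LazyBurned E B v
  | spread (v : V) (h : Finset V) (hE : h ∈ E) (hcard : 2 ≤ h.card) (hv : v ∈ h)
      (hall : ∀ u ∈ h, u ≠ v → LazyBurned E B u) : LazyBurned E B v

def IsLazyBurningSet (E : Finset (Finset V)) (B : Set V) : Prop := ∀ v, LazyBurned E B v

noncomputable def lazyBurningNumber (E : Finset (Finset V)) : ℕ :=
  sInf {n | ∃ B : Set V, B.ncard = n ∧ IsLazyBurningSet E B}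

/-- one round of propagation in hypergraph burning -/
def hSpread (E : Finset (Finset V)) (S : Set V) : Set V :=
  S ∪ {v | ∃ h ∈ E, 2 ≤ h.card ∧ v ∈ h ∧ ∀ u ∈ h, u ≠ v → u ∈ S}

/-- burned vertices after t rounds of the (round-based) hypergraph burning process -/
def hBurnedAt (E : Finset (Finset V)) {k : ℕ} (s : Fin k → V) : ℕ → Set V
  | 0 => ∅
  | t + 1 => hSpread E (hBurnedAt E s t) ∪ {v | ∃ ht : t < k, v = s ⟨t, ht⟩}

noncomputable def hBurningNumber (E : Finset (Finset V)) : ℕ :=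
  sInf {k | ∃ s : Fin k → V,
    (∀ t : Fin k, s t ∉ hBurnedAt E s (t : ℕ)) ∧ hBurnedAt E s k = Set.univ}

/-- incidence graph of a hypergraph -/
def IG (E : Finset (Finset V)) : SimpleGraph (V ⊕ {h // h ∈ E}) where
  Adj x y := (∃ v h, x = Sum.inl v ∧ y = Sum.inr h ∧ v ∈ (h : Finset V)) ∨
    (∃ v h, x = Sum.inr h ∧ y = Sum.inl v ∧ v ∈ (h : Finset V))
  symm := by
    constructor
    rintro x y (⟨v, h, rfl, rfl, hm⟩ | ⟨v, h, rfl, rfl, hm⟩)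
    · exact Or.inr ⟨v, h, rfl, rfl, hm⟩
    · exact Or.inl ⟨v, h, rfl, rfl, hm⟩
  loopless := by
    constructor
    rintro x (⟨v, h, rfl, he, hm⟩ | ⟨v, h, rfl, he, hm⟩) <;> simp at he

/-- connectivity relation of a hypergraph -/
def hconn (E : Finset (Finset V)) : V → V → Prop :=
  Relation.ReflTransGen (fun u v => ∃ h ∈ E, u ∈ h ∧ v ∈ h)

end Hypergraph

instance (n : ℕ) : DecidableRel (SimpleGraph.completeGraph (Fin n)).Adj :=
  fun a b => inferInstanceAs (Decidable (a ≠ b))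

open Matrix Polynomial Kronecker

private lemma myEvalCharpoly {ι : Type*} [Fintype ι] [DecidableEq ι]
    (M : Matrix ι ι ℂ) (x : ℂ) :
    M.charpoly.eval x = (x • (1 : Matrix ι ι ℂ) - M).det := by
  rw [Matrix.charpoly, ← Polynomial.coe_evalRingHom, RingHom.map_det]
  congr 1
  ext i j
  by_cases h : i = j
  · subst h
    simp [Matrix.charmatrix_apply_eq, Matrix.one_apply, Matrix.smul_apply]
  · simp [Matrix.charmatrix_apply_ne _ _ _ h, Matrix.one_apply, h, Matrix.smul_apply]

private lemma adjProd_eq {α : Type*} [Fintype α] [DecidableEq α]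
    (G : SimpleGraph α) [DecidableRel G.Adj] (n : ℕ) :
    (G.strongProd (SimpleGraph.completeGraph (Fin n))).adjMatrix ℂ =
      (G.adjMatrix ℂ + 1) ⊗ₖ (Matrix.of fun (_ _ : Fin n) => (1 : ℂ)) - 1 := by
  ext ⟨u, i⟩ ⟨v, j⟩
  simp only [SimpleGraph.adjMatrix_apply, Matrix.sub_apply, Matrix.kroneckerMap_apply,
    Matrix.add_apply, Matrix.one_apply, Matrix.of_apply, Prod.mk.injEq]
  by_cases huv : u = v
  · subst huv
    by_cases hij : i = j
    · subst hij
      simp [SimpleGraph.strongProd, SimpleGraph.completeGraph, G.irrefl]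
    · simp [SimpleGraph.strongProd, SimpleGraph.completeGraph, G.irrefl, hij]
  · by_cases hadj : G.Adj u v
    · by_cases hij : i = j <;>
        simp [SimpleGraph.strongProd, SimpleGraph.completeGraph, huv, hadj, hij]
    · have : ¬ (G.strongProd (SimpleGraph.completeGraph (Fin n))).Adj (u, i) (v, j) := by
        rintro (⟨h1, _⟩ | ⟨_, h2⟩ | ⟨h1, _⟩) <;> first | exact huv h1 | exact hadj h2 | exact hadj h1
      simp only [SimpleGraph.completeGraph_eq_top] at this
      simp [this, huv, hadj]

private lemma detProdEq {α : Type*} [Fintype α] [DecidableEq α]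
    (G : SimpleGraph α) [DecidableRel G.Adj] (n : ℕ) (hn : 2 ≤ n) (x : ℂ) (hx : x + 1 ≠ 0) :
    (x • (1 : Matrix (α × Fin n) (α × Fin n) ℂ) -
        (G.strongProd (SimpleGraph.completeGraph (Fin n))).adjMatrix ℂ).det =
      (x + 1) ^ (Fintype.card α * n) * ((x + 1)⁻¹ * n) ^ (Fintype.card α) *
        (G.adjMatrix ℂ).charpoly.eval ((x + 1) / n - 1) := by
  classical
  have hn0 : (n : ℂ) ≠ 0 := Nat.cast_ne_zero.mpr (by omega)
  set A := G.adjMatrix ℂ with hA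
  set M := A + 1 with hM
  set J : Matrix (Fin n) (Fin n) ℂ := Matrix.of fun _ _ => (1 : ℂ) with hJ
  set col : Matrix (Fin n) Unit ℂ := Matrix.of fun _ _ => (1 : ℂ) with hcol
  set row : Matrix Unit (Fin n) ℂ := Matrix.of fun _ _ => (1 : ℂ) with hrow
  set t : ℂ := (x + 1)⁻¹ * n with ht
  have ht0 : t ≠ 0 := mul_ne_zero (inv_ne_zero hx) hn0
  -- step 1
  have step1 : x • (1 : Matrix (α × Fin n) (α × Fin n) ℂ) -
      (G.strongProd (SimpleGraph.completeGraph (Fin n))).adjMatrix ℂ =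
      (x + 1) • (1 : Matrix (α × Fin n) (α × Fin n) ℂ) - M ⊗ₖ J := by
    rw [adjProd_eq G n, ← hA, ← hM, ← hJ, add_smul, one_smul]
    abel
  rw [step1]
  -- step 2 : pull out (x+1)
  have step2 : (x + 1) • (1 : Matrix (α × Fin n) (α × Fin n) ℂ) - M ⊗ₖ J =
      (x + 1) • ((1 : Matrix (α × Fin n) (α × Fin n) ℂ) - (x + 1)⁻¹ • (M ⊗ₖ J)) := by
    rw [smul_sub, smul_smul, mul_inv_cancel₀ hx, one_smul]
  rw [step2, Matrix.det_smul]
  have hcard : Fintype.card (α × Fin n) = Fintype.card α * n := by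
    simp [Fintype.card_prod]
  rw [hcard]
  -- step 3 : factor as product of rectangles
  have hJcr : J = col * row := by
    ext i j
    simp [hJ, hcol, hrow, Matrix.mul_apply]
  have step3 : (x + 1)⁻¹ • (M ⊗ₖ J) = (((x + 1)⁻¹ • M) ⊗ₖ col) * ((1 : Matrix α α ℂ) ⊗ₖ row) := by
    rw [← Matrix.mul_kronecker_mul, Matrix.mul_one, ← hJcr, Matrix.smul_kronecker]
  rw [step3, Matrix.det_one_sub_mul_comm]
  -- step 4 : the small product
  have hrc : row * col = (n : ℂ) • (1 : Matrix Unit Unit ℂ) := by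
    ext i j
    simp [hrow, hcol, Matrix.mul_apply, Matrix.one_apply]
  have step4 : ((1 : Matrix α α ℂ) ⊗ₖ row) * (((x + 1)⁻¹ • M) ⊗ₖ col) =
      t • (M ⊗ₖ (1 : Matrix Unit Unit ℂ)) := by
    rw [← Matrix.mul_kronecker_mul, Matrix.one_mul, hrc, Matrix.smul_kronecker,
      Matrix.kronecker_smul, smul_smul, ht]
  rw [step4]
  -- step 5 : reindex to α
  have step5 : ((1 : Matrix (α × Unit) (α × Unit) ℂ) - t • (M ⊗ₖ (1 : Matrix Unit Unit ℂ))).det =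
      ((1 : Matrix α α ℂ) - t • M).det := by
    have he : ((1 : Matrix (α × Unit) (α × Unit) ℂ) -
        t • (M ⊗ₖ (1 : Matrix Unit Unit ℂ))).submatrix
          (Equiv.prodPUnit α).symm (Equiv.prodPUnit α).symm =
        (1 : Matrix α α ℂ) - t • M := by
      ext a b
      simp [Matrix.submatrix_apply, Matrix.one_apply, Prod.ext_iff, Matrix.kroneckerMap_apply]
    rw [← he]
    exact (Matrix.det_submatrix_equiv_self (Equiv.prodPUnit α).symm _).symm
  rw [step5]
  -- step 6 : extract charpoly of A
  have h1 : ((x + 1)⁻¹ * (n : ℂ)) * ((x + 1) / (n : ℂ) - 1) = 1 - (x + 1)⁻¹ * (n : ℂ) := by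
    field_simp
  have hts : t * ((x + 1) / (n : ℂ) - 1) = 1 - t := by rw [ht]; exact h1
  have step6 : (1 : Matrix α α ℂ) - t • M = t • (((x + 1) / n - 1) • 1 - A) := by
    rw [hM, smul_sub, smul_smul, hts, smul_add, sub_smul, one_smul]
    abel
  rw [step6, Matrix.det_smul, ← myEvalCharpoly]
  ring


section BurnAux

variable {α : Type*} {n : ℕ} {G : SimpleGraph α}

private lemma walk_proj {x y : α × Fin n}
    (w : (G.strongProd (SimpleGraph.completeGraph (Fin n))).Walk x y) :
    ∃ w' : G.Walk x.1 y.1, w'.length ≤ w.length := by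
  induction w with
  | nil => exact ⟨.nil, le_rfl⟩
  | @cons a b c h p ih =>
    obtain ⟨w', hw'⟩ := ih
    rcases h with ⟨h1, _⟩ | ⟨_, h2⟩ | ⟨h1, _⟩
    · show ∃ w' : G.Walk a.1 c.1, w'.length ≤ p.length + 1
      rw [h1]
      exact ⟨w', hw'.trans (Nat.le_succ _)⟩
    · refine ⟨.cons h2 w', ?_⟩
      show w'.length + 1 ≤ p.length + 1
      omega
    · refine ⟨.cons h1 w', ?_⟩
      show w'.length + 1 ≤ p.length + 1
      omega

private lemma edist_proj (x y : α × Fin n) :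
    G.edist x.1 y.1 ≤ (G.strongProd (SimpleGraph.completeGraph (Fin n))).edist x y := by
  by_cases hr : (G.strongProd (SimpleGraph.completeGraph (Fin n))).Reachable x y
  · obtain ⟨w, hw⟩ := hr.exists_walk_length_eq_edist
    obtain ⟨w', hw'⟩ := walk_proj w
    calc G.edist x.1 y.1 ≤ w'.length := SimpleGraph.edist_le _
      _ ≤ (w.length : ℕ∞) := by exact_mod_cast hw'
      _ = _ := hw
  · rw [SimpleGraph.edist_eq_top_of_not_reachable hr]; exact le_top

private lemma walk_lift {u v : α} (w : G.Walk u v) (hw : 1 ≤ w.length) (i j : Fin n) :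
    ∃ w' : (G.strongProd (SimpleGraph.completeGraph (Fin n))).Walk (u, i) (v, j),
      w'.length ≤ w.length := by
  induction w with
  | nil => simp at hw
  | @cons a b c h p ih =>
    rcases Nat.eq_zero_or_pos p.length with h0 | h1
    · have hbc : b = c := SimpleGraph.Walk.eq_of_length_eq_zero h0
      subst hbc
      have hadj : (G.strongProd (SimpleGraph.completeGraph (Fin n))).Adj (a, i) (b, j) := by
        by_cases hij : i = j
        · refine Or.inr (Or.inl ⟨?_, ?_⟩)
          · show i = j; exact hij
          · show G.Adj a b; exact h
        · refine Or.inr (Or.inr ⟨?_, ?_⟩)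
          · show G.Adj a b; exact h
          · show i ≠ j; exact hij
      exact ⟨.cons hadj .nil, by simp⟩
    · obtain ⟨w', hw'⟩ := ih h1
      have hadj : (G.strongProd (SimpleGraph.completeGraph (Fin n))).Adj (a, i) (b, i) := by
        refine Or.inr (Or.inl ⟨?_, ?_⟩)
        · show i = i; rfl
        · show G.Adj a b; exact h
      refine ⟨.cons hadj w', ?_⟩
      rw [SimpleGraph.Walk.length_cons, SimpleGraph.Walk.length_cons]
      omega

private lemma edist_lift {u v : α} (i j : Fin n) (r : ℕ) (hr : 1 ≤ r)
    (h : G.edist u v ≤ (r : ℕ∞)) :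
    (G.strongProd (SimpleGraph.completeGraph (Fin n))).edist (u, i) (v, j) ≤ (r : ℕ∞) := by
  have hne : G.edist u v ≠ ⊤ := fun ht => by simp [ht] at h
  obtain ⟨w, hw⟩ := SimpleGraph.exists_walk_of_edist_ne_top hne
  have hwr : (w.length : ℕ∞) ≤ (r : ℕ∞) := by rw [hw]; exact h
  have hwr' : w.length ≤ r := by exact_mod_cast hwr
  rcases Nat.eq_zero_or_pos w.length with h0 | h1
  · have huv : u = v := SimpleGraph.Walk.eq_of_length_eq_zero h0
    subst huv
    by_cases hij : i = j
    · subst hij; rw [SimpleGraph.edist_self]; exact zero_le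
    · have hadj : (G.strongProd (SimpleGraph.completeGraph (Fin n))).Adj (u, i) (u, j) :=
        Or.inl ⟨rfl, hij⟩
      calc (G.strongProd (SimpleGraph.completeGraph (Fin n))).edist (u, i) (u, j)
          ≤ ((SimpleGraph.Walk.cons hadj .nil).length : ℕ∞) := SimpleGraph.edist_le _
        _ ≤ (r : ℕ∞) := by simp; exact_mod_cast hr
  · obtain ⟨w', hw'⟩ := walk_lift w h1 i j
    calc (G.strongProd (SimpleGraph.completeGraph (Fin n))).edist (u, i) (v, j)
        ≤ (w'.length : ℕ∞) := SimpleGraph.edist_le _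
      _ ≤ (w.length : ℕ∞) := by exact_mod_cast hw'
      _ ≤ (r : ℕ∞) := hwr

end BurnAux


section Cover

variable {V : Type*}

private lemma enat_le_of_lt_coe {e : ℕ∞} {m : ℕ} (h : e < (m : ℕ∞)) (hm : 1 ≤ m) :
    e ≤ ((m - 1 : ℕ) : ℕ∞) := by
  induction e using ENat.recTopCoe with
  | top => exact absurd h (by simp)
  | coe a =>
    have : a < m := by exact_mod_cast h
    exact_mod_cast Nat.le_sub_one_of_lt this

private lemma burn_of_cover (G : SimpleGraph V) :
    ∀ k : ℕ, ∀ x : Fin k → V,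
      (⋃ l : Fin k, G.closedBall (x l) (k - 1 - (l : ℕ))) = Set.univ →
      ∃ k' ≤ k, ∃ s : Fin k' → V, G.IsBurningSeq s := by
  intro k
  induction k using Nat.strong_induction_on with
  | _ k IH =>
  intro x hx
  have inner : ∀ i : ℕ, i ≤ k →
      (∃ y : Fin i → V,
        (∀ a b : Fin i, a ≠ b →
          ((((a : ℕ) : ℤ) - ((b : ℕ) : ℤ)).natAbs : ℕ∞) ≤ G.edist (y a) (y b)) ∧
        (∀ l : Fin k, (l : ℕ) < i → G.closedBall (x l) (k - 1 - (l : ℕ)) ⊆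
          ⋃ a : Fin i, G.closedBall (y a) (k - 1 - (a : ℕ)))) ∨
      (∃ k' < k, ∃ z : Fin k' → V,
        (⋃ l : Fin k', G.closedBall (z l) (k' - 1 - (l : ℕ))) = Set.univ) := by
    intro i
    induction i with
    | zero =>
      intro _
      exact Or.inl ⟨fun a => a.elim0, fun a => a.elim0, fun l hl => absurd hl (Nat.not_lt_zero _)⟩
    | succ i ih =>
      intro hik
      rcases ih (Nat.le_of_succ_le hik) with ⟨y, hval, hcov⟩ | hr
      swap
      · exact Or.inr hr
      by_cases hex : ∃ v : V, ∀ a : Fin i, (((i - (a : ℕ) : ℕ)) : ℕ∞) ≤ G.edist v (y a)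
      swap
      · -- no far vertex: early covering of length i
        push_neg at hex
        refine Or.inr ⟨i, Nat.lt_of_succ_le hik, y, ?_⟩
        ext v
        simp only [Set.mem_iUnion, Set.mem_univ, iff_true]
        obtain ⟨a, ha⟩ := hex v
        refine ⟨a, ?_⟩
        have ha1 : 1 ≤ i - (a : ℕ) := by omega
        have hle := enat_le_of_lt_coe ha ha1
        have harith : i - (a : ℕ) - 1 = i - 1 - (a : ℕ) := by omega
        rw [harith] at hle
        rw [SimpleGraph.closedBall, Set.mem_setOf_eq, SimpleGraph.edist_comm]
        exact hle
      · -- can extend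
        -- pick the new vertex
        have key : ∃ v : V, (∀ a : Fin i, (((i - (a : ℕ) : ℕ)) : ℕ∞) ≤ G.edist v (y a)) ∧
            G.closedBall (x ⟨i, hik⟩) (k - 1 - i) ⊆
              (⋃ a : Fin i, G.closedBall (y a) (k - 1 - (a : ℕ))) ∪
                G.closedBall v (k - 1 - i) := by
          by_cases hfar : ∀ a : Fin i, (((i - (a : ℕ) : ℕ)) : ℕ∞) ≤ G.edist (x ⟨i, hik⟩) (y a)
          · exact ⟨x ⟨i, hik⟩, hfar, fun w hw => Or.inr hw⟩
          · obtain ⟨v0, hv0⟩ := hex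
            push_neg at hfar
            obtain ⟨a, ha⟩ := hfar
            refine ⟨v0, hv0, fun w hw => Or.inl ?_⟩
            have ha1 : 1 ≤ i - (a : ℕ) := by omega
            have hle := enat_le_of_lt_coe ha ha1
            refine Set.mem_iUnion.mpr ⟨a, ?_⟩
            rw [SimpleGraph.closedBall, Set.mem_setOf_eq] at hw ⊢
            calc G.edist (y a) w ≤ G.edist (y a) (x ⟨i, hik⟩) + G.edist (x ⟨i, hik⟩) w :=
                  SimpleGraph.edist_triangle
              _ ≤ ((i - (a : ℕ) - 1 : ℕ) : ℕ∞) + ((k - 1 - i : ℕ) : ℕ∞) := by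
                  exact add_le_add (by rw [SimpleGraph.edist_comm]; exact hle) hw
              _ = (((i - (a : ℕ) - 1) + (k - 1 - i) : ℕ) : ℕ∞) := by
                  rw [Nat.cast_add]
              _ ≤ ((k - 1 - (a : ℕ) : ℕ) : ℕ∞) := by
                  have : (i - (a : ℕ) - 1) + (k - 1 - i) ≤ k - 1 - (a : ℕ) := by omega
                  exact_mod_cast this
        obtain ⟨v, hvfar, hvcov⟩ := key
        refine Or.inl ⟨Fin.snoc y v, ?_, ?_⟩
        · intro a b hab
          rcases Fin.eq_castSucc_or_eq_last a with ⟨a', rfl⟩ | rfl <;>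
            rcases Fin.eq_castSucc_or_eq_last b with ⟨b', rfl⟩ | rfl
          · rw [Fin.snoc_castSucc, Fin.snoc_castSucc]
            have : a' ≠ b' := fun h => hab (by rw [h])
            simpa using hval a' b' this
          · rw [Fin.snoc_castSucc, Fin.snoc_last]
            have h1 := hvfar a'
            rw [SimpleGraph.edist_comm] at h1
            have h2 : ((((a'.castSucc : ℕ) : ℤ) - (((Fin.last i : Fin (i+1)) : ℕ) : ℤ)).natAbs)
                = i - (a' : ℕ) := by
              simp only [Fin.coe_castSucc, Fin.val_last]
              omega
            rw [h2]
            exact h1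
          · rw [Fin.snoc_last, Fin.snoc_castSucc]
            have h1 := hvfar b'
            have h2 : (((((Fin.last i : Fin (i+1)) : ℕ) : ℤ) - ((b'.castSucc : ℕ) : ℤ)).natAbs)
                = i - (b' : ℕ) := by
              simp only [Fin.coe_castSucc, Fin.val_last]
              omega
            rw [h2]
            exact h1
          · exact absurd rfl hab
        · intro l hl
          by_cases hli : (l : ℕ) < i
          · refine (hcov l hli).trans ?_
            intro w hw
            obtain ⟨a, ha⟩ := Set.mem_iUnion.mp hw
            refine Set.mem_iUnion.mpr ⟨a.castSucc, ?_⟩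
            rw [Fin.snoc_castSucc]
            simpa using ha
          · have hli' : (l : ℕ) = i := by omega
            have hxl : x l = x ⟨i, hik⟩ := by congr 1; exact Fin.ext hli'
            rw [hxl, hli']
            refine hvcov.trans ?_
            intro w hw
            rcases hw with hw | hw
            · obtain ⟨a, ha⟩ := Set.mem_iUnion.mp hw
              refine Set.mem_iUnion.mpr ⟨a.castSucc, ?_⟩
              rw [Fin.snoc_castSucc]
              simpa using ha
            · refine Set.mem_iUnion.mpr ⟨Fin.last i, ?_⟩
              rw [Fin.snoc_last]
              simpa using hw
  rcases inner k le_rfl with ⟨y, hval, hcov⟩ | ⟨k', hk', z, hz⟩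
  · refine ⟨k, le_rfl, y, hval, ?_⟩
    rw [Set.eq_univ_iff_forall]
    intro v
    have hv : v ∈ ⋃ l : Fin k, G.closedBall (x l) (k - 1 - (l : ℕ)) := by
      rw [hx]; trivial
    obtain ⟨l, hl⟩ := Set.mem_iUnion.mp hv
    exact hcov l l.isLt hl
  · obtain ⟨k'', hk'', s, hs⟩ := IH k' hk' z hz
    exact ⟨k'', le_trans hk'' (le_of_lt hk'), s, hs⟩

end Cover


private lemma burningNumber_strongProd {α : Type*} (G : SimpleGraph α) {n : ℕ} (hn : 2 ≤ n)
    (hG : ∃ s : Fin G.burningNumber → α, G.IsBurningSeq s ∧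
      (⋃ l ∈ {l : Fin G.burningNumber | (l : ℕ) < G.burningNumber - 1},
        G.closedBall (s l) (G.burningNumber - 1 - (l : ℕ))) = Set.univ) :
    (G.strongProd (SimpleGraph.completeGraph (Fin n))).burningNumber = G.burningNumber := by
  classical
  obtain ⟨s, ⟨hdist, _⟩, hred⟩ := hG
  have i0 : Fin n := ⟨0, by omega⟩
  have hup : ∃ t : Fin G.burningNumber → α × Fin n,
      (G.strongProd (SimpleGraph.completeGraph (Fin n))).IsBurningSeq t := by
    refine ⟨fun l => (s l, i0), ?_, ?_⟩
    · intro i j hij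
      exact (hdist i j hij).trans (edist_proj (s i, i0) (s j, i0))
    · rw [Set.eq_univ_iff_forall]
      rintro ⟨v, j⟩
      have hv : v ∈ ⋃ l ∈ {l : Fin G.burningNumber | (l : ℕ) < G.burningNumber - 1},
          G.closedBall (s l) (G.burningNumber - 1 - (l : ℕ)) := by rw [hred]; trivial
      obtain ⟨l, hl, hvl⟩ := Set.mem_iUnion₂.mp hv
      simp only [Set.mem_setOf_eq] at hl
      refine Set.mem_iUnion.mpr ⟨l, ?_⟩
      rw [SimpleGraph.closedBall, Set.mem_setOf_eq] at hvl ⊢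
      exact edist_lift i0 j (G.burningNumber - 1 - (l : ℕ)) (by omega) hvl
  have hle : (G.strongProd (SimpleGraph.completeGraph (Fin n))).burningNumber ≤ G.burningNumber := by
    rw [show (G.strongProd (SimpleGraph.completeGraph (Fin n))).burningNumber =
      sInf {m | ∃ t : Fin m → α × Fin n,
        (G.strongProd (SimpleGraph.completeGraph (Fin n))).IsBurningSeq t} from rfl]
    exact Nat.sInf_le hup
  have hge : G.burningNumber ≤ (G.strongProd (SimpleGraph.completeGraph (Fin n))).burningNumber := by
    have hne : {m | ∃ t : Fin m → α × Fin n,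
        (G.strongProd (SimpleGraph.completeGraph (Fin n))).IsBurningSeq t}.Nonempty :=
      ⟨G.burningNumber, hup⟩
    have hmem : ∃ t : Fin ((G.strongProd (SimpleGraph.completeGraph (Fin n))).burningNumber) → α × Fin n,
        (G.strongProd (SimpleGraph.completeGraph (Fin n))).IsBurningSeq t := Nat.sInf_mem hne
    obtain ⟨t, _, hcov⟩ := hmem
    have hcovG : (⋃ l : Fin ((G.strongProd (SimpleGraph.completeGraph (Fin n))).burningNumber),
        G.closedBall ((t l).1)
          ((G.strongProd (SimpleGraph.completeGraph (Fin n))).burningNumber - 1 - (l : ℕ))) = Set.univ := by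
      rw [Set.eq_univ_iff_forall]
      intro u
      have hu : ((u, i0) : α × Fin n) ∈
          ⋃ l : Fin ((G.strongProd (SimpleGraph.completeGraph (Fin n))).burningNumber),
            (G.strongProd (SimpleGraph.completeGraph (Fin n))).closedBall (t l)
              ((G.strongProd (SimpleGraph.completeGraph (Fin n))).burningNumber - 1 - (l : ℕ)) := by
        rw [hcov]; trivial
      obtain ⟨l, hl⟩ := Set.mem_iUnion.mp hu
      refine Set.mem_iUnion.mpr ⟨l, ?_⟩
      rw [SimpleGraph.closedBall, Set.mem_setOf_eq] at hl ⊢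
      exact le_trans (edist_proj (t l) (u, i0)) hl
    obtain ⟨k', hk', s', hs'⟩ :=
      burn_of_cover G ((G.strongProd (SimpleGraph.completeGraph (Fin n))).burningNumber) _ hcovG
    refine le_trans ?_ hk'
    rw [show G.burningNumber = sInf {m | ∃ s : Fin m → α, G.IsBurningSeq s} from rfl]
    exact Nat.sInf_le ⟨s', hs'⟩
  omega


/-- If `G` and `H` are cospectral with different burning numbers and each has an optimal
burning sequence ending in a redundant source, then for every `n ≥ 2` the strong products
`G ⊠ K_n` and `H ⊠ K_n` are cospectral with different burning numbers. -/
theorem stmt17 {α β : Type*} [Fintype α] [Fintype β] [DecidableEq α] [DecidableEq β]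
    (G : SimpleGraph α) (H : SimpleGraph β) [DecidableRel G.Adj] [DecidableRel H.Adj]
    (hco : (G.adjMatrix ℂ).charpoly = (H.adjMatrix ℂ).charpoly)
    (hne : G.burningNumber ≠ H.burningNumber)
    (hG : ∃ s : Fin G.burningNumber → α, G.IsBurningSeq s ∧
      (⋃ l ∈ {l : Fin G.burningNumber | (l : ℕ) < G.burningNumber - 1},
        G.closedBall (s l) (G.burningNumber - 1 - (l : ℕ))) = Set.univ)
    (hH : ∃ s : Fin H.burningNumber → β, H.IsBurningSeq s ∧
      (⋃ l ∈ {l : Fin H.burningNumber | (l : ℕ) < H.burningNumber - 1},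
        H.closedBall (s l) (H.burningNumber - 1 - (l : ℕ))) = Set.univ) :
    ∀ n : ℕ, 2 ≤ n →
      (((G.strongProd (SimpleGraph.completeGraph (Fin n))).adjMatrix ℂ).charpoly =
        ((H.strongProd (SimpleGraph.completeGraph (Fin n))).adjMatrix ℂ).charpoly) ∧
      (G.strongProd (SimpleGraph.completeGraph (Fin n))).burningNumber ≠
        (H.strongProd (SimpleGraph.completeGraph (Fin n))).burningNumber := by

  intro n hn
  have hcard : Fintype.card α = Fintype.card β := by
    have h1 := Matrix.charpoly_natDegree_eq_dim (G.adjMatrix ℂ)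
    have h2 := Matrix.charpoly_natDegree_eq_dim (H.adjMatrix ℂ)
    rw [← h1, ← h2, hco]
  constructor
  · apply Polynomial.eq_of_infinite_eval_eq
    have hinf : ({x : ℂ | x ≠ -1}).Infinite := by
      rw [show {x : ℂ | x ≠ -1} = (({-1} : Set ℂ)ᶜ) from by ext; simp]
      exact (Set.finite_singleton (-1 : ℂ)).infinite_compl
    refine hinf.mono ?_
    intro x hx
    have hx1 : x + 1 ≠ 0 := fun h => hx (eq_neg_of_add_eq_zero_left h)
    simp only [Set.mem_setOf_eq]
    rw [myEvalCharpoly, myEvalCharpoly, detProdEq G n hn x hx1, detProdEq H n hn x hx1,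
      hco, hcard]
  · rw [burningNumber_strongProd G hn hG, burningNumber_strongProd H hn hH]
    exact hne
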